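/- arXiv:2310.02767 — 2 statements merged into one kernel-verified Lean document; each statement's English description precedes it below -/
import Mathlib

section
/- Let H be a real Hilbert space, (Ω, 𝔽, P) a probability space, and (V_i)_{i≥1} a sequence of H-valued random variables that are Bochner square-integrable (E‖V_i‖² < ∞ for each i). Suppose there exists a constant B < ∞ such that for every i ≥ 1, ∑_{k=0}^∞ |E⟨V_i − E V_i, V_{i+k} − E V_{i+k}⟩| ≤ B. Then for every integer t ≥ 1, E‖(1/t) ∑_{i=1}^t (V_i − E V_i)‖² ≤ 2B/t, and consequently E‖(1/t) ∑_{i=1}^t (V_i − E V_i)‖ ≤ √(2B/t). -/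
open MeasureTheory

lemma my_integrable_inner {Ω : Type*} [MeasurableSpace Ω] {P : Measure Ω}
    {H : Type*} [NormedAddCommGroup H] [InnerProductSpace ℝ H]
    {f g : Ω → H} (hf : MemLp f 2 P) (hg : MemLp g 2 P) :
    Integrable (fun ω => (inner ℝ (f ω) (g ω) : ℝ)) P := by
  have h := L2.integrable_inner (𝕜 := ℝ) (hf.toLp f) (hg.toLp g)
  refine h.congr ?_
  filter_upwards [hf.coeFn_toLp, hg.coeFn_toLp] with ω h1 h2
  rw [h1, h2]

lemma my_integral_norm_le_sqrt {Ω : Type*} [MeasurableSpace Ω] {P : Measure Ω}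
    [IsProbabilityMeasure P]
    {H : Type*} [NormedAddCommGroup H]
    {f : Ω → H} (hf : MemLp f 2 P) :
    ∫ ω, ‖f ω‖ ∂P ≤ Real.sqrt (∫ ω, ‖f ω‖ ^ 2 ∂P) := by
  have hpq : (2:ℝ).HolderConjugate 2 := by constructor <;> norm_num
  have hf2 : MemLp (fun ω => ‖f ω‖) (ENNReal.ofReal 2) P := by
    rw [show ENNReal.ofReal 2 = 2 by norm_num]; exact hf.norm
  have hg : MemLp (fun _ : Ω => (1:ℝ)) (ENNReal.ofReal 2) P := memLp_const 1
  have h := integral_mul_norm_le_Lp_mul_Lq (μ := P) hpq hf2 hg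
  have h1 : ∫ (_ : Ω), ‖(1:ℝ)‖ ^ (2:ℝ) ∂P = 1 := by simp
  rw [h1, Real.one_rpow, mul_one] at h
  have h2 : ∫ a, ‖‖f a‖‖ * ‖(1:ℝ)‖ ∂P = ∫ ω, ‖f ω‖ ∂P := by simp
  rw [h2] at h
  have h3 : ∫ a, ‖‖f a‖‖ ^ (2:ℝ) ∂P = ∫ ω, ‖f ω‖ ^ 2 ∂P := by
    refine integral_congr_ae (Filter.Eventually.of_forall fun ω => ?_)
    simp only [norm_norm]
    rw [show ((2:ℝ)) = ((2:ℕ):ℝ) by norm_num, Real.rpow_natCast]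
  rw [h3] at h
  rw [Real.sqrt_eq_rpow]; exact h

theorem hilbert_valued_average_bound_of_summable_cov
    {Ω : Type*} [MeasurableSpace Ω] (P : Measure Ω) [IsProbabilityMeasure P]
    {H : Type*} [NormedAddCommGroup H] [InnerProductSpace ℝ H]
    (V : ℕ → Ω → H) (hV : ∀ i, 1 ≤ i → MemLp (V i) 2 P)
    (B : ℝ)
    (hSummable : ∀ i, 1 ≤ i → Summable (fun k : ℕ =>
      |∫ ω, inner (𝕜 := ℝ)
        (V i ω - ∫ ω', V i ω' ∂P) (V (i + k) ω - ∫ ω', V (i + k) ω' ∂P) ∂P|))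
    (hB : ∀ i, 1 ≤ i → ∑' k : ℕ,
      |∫ ω, inner (𝕜 := ℝ)
        (V i ω - ∫ ω', V i ω' ∂P) (V (i + k) ω - ∫ ω', V (i + k) ω' ∂P) ∂P| ≤ B)
    (t : ℕ) (ht : 1 ≤ t) :
    (∫ ω, ‖(1 / (t : ℝ)) • ∑ i ∈ Finset.Icc 1 t, (V i ω - ∫ ω', V i ω' ∂P)‖ ^ 2 ∂P
        ≤ 2 * B / t) ∧
      (∫ ω, ‖(1 / (t : ℝ)) • ∑ i ∈ Finset.Icc 1 t, (V i ω - ∫ ω', V i ω' ∂P)‖ ∂P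
        ≤ Real.sqrt (2 * B / t)) := by
  classical
  have hW : ∀ i, 1 ≤ i → MemLp (fun ω => V i ω - ∫ ω', V i ω' ∂P) 2 P :=
    fun i hi => (hV i hi).sub (memLp_const _)
  set c : ℕ → ℕ → ℝ := fun i j => ∫ ω, (inner ℝ (V i ω - ∫ ω', V i ω' ∂P)
      (V j ω - ∫ ω', V j ω' ∂P) : ℝ) ∂P with hc
  have csymm : ∀ i j, c i j = c j i := by
    intro i j
    simp only [hc]
    exact integral_congr_ae (Filter.Eventually.of_forall fun ω => real_inner_comm _ _)
  -- row bound
  have hrow : ∀ i, 1 ≤ i → i ≤ t → ∑ j ∈ Finset.Icc i t, |c i j| ≤ B := by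
    intro i hi1 hit
    have hmap : ∑ j ∈ Finset.Icc i t, |c i j| = ∑ k ∈ Finset.Icc 0 (t - i), |c i (i + k)| := by
      rw [show Finset.Icc i t = (Finset.Icc 0 (t - i)).map (addLeftEmbedding i) by
        rw [Finset.map_add_left_Icc, add_zero, Nat.add_sub_cancel' hit], Finset.sum_map]
      rfl
    have hs : Summable (fun k => |c i (i + k)|) := hSummable i hi1
    calc ∑ j ∈ Finset.Icc i t, |c i j| = ∑ k ∈ Finset.Icc 0 (t - i), |c i (i + k)| := hmap
      _ ≤ ∑' k, |c i (i + k)| := Summable.sum_le_tsum _ (fun k _ => abs_nonneg _) hs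
      _ ≤ B := hB i hi1
  -- expansion
  have hint : ∀ i ∈ Finset.Icc 1 t, ∀ j ∈ Finset.Icc 1 t,
      Integrable (fun ω => (inner ℝ (V i ω - ∫ ω', V i ω' ∂P)
        (V j ω - ∫ ω', V j ω' ∂P) : ℝ)) P := fun i hi j hj =>
    my_integrable_inner (hW i (Finset.mem_Icc.1 hi).1) (hW j (Finset.mem_Icc.1 hj).1)
  have hexp : ∫ ω, ‖∑ i ∈ Finset.Icc 1 t, (V i ω - ∫ ω', V i ω' ∂P)‖ ^ 2 ∂P
      = ∑ i ∈ Finset.Icc 1 t, ∑ j ∈ Finset.Icc 1 t, c i j := by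
    have hpt : ∀ ω, ‖∑ i ∈ Finset.Icc 1 t, (V i ω - ∫ ω', V i ω' ∂P)‖ ^ 2
        = ∑ i ∈ Finset.Icc 1 t, ∑ j ∈ Finset.Icc 1 t,
          (inner ℝ (V i ω - ∫ ω', V i ω' ∂P) (V j ω - ∫ ω', V j ω' ∂P) : ℝ) := by
      intro ω
      rw [← real_inner_self_eq_norm_sq, sum_inner]
      exact Finset.sum_congr rfl fun i _ => inner_sum _ _ _
    rw [integral_congr_ae (Filter.Eventually.of_forall hpt),
      integral_finset_sum _ (fun i hi => integrable_finset_sum _ (fun j hj => hint i hi j hj))]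
    exact Finset.sum_congr rfl fun i hi => integral_finset_sum _ fun j hj => hint i hi j hj
  -- double sum bound
  have hdouble : ∑ i ∈ Finset.Icc 1 t, ∑ j ∈ Finset.Icc 1 t, c i j ≤ 2 * t * B := by
    have h1 : ∀ i, 1 ≤ i → i ≤ t →
        ∑ j ∈ Finset.Icc 1 t, (if i ≤ j then |c i j| else 0) ≤ B := by
      intro i hi1 hit
      rw [← Finset.sum_filter]
      refine le_trans (Finset.sum_le_sum_of_subset_of_nonneg ?_
        (fun j _ _ => abs_nonneg _)) (hrow i hi1 hit)
      intro j hj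
      simp only [Finset.mem_filter, Finset.mem_Icc] at hj ⊢
      omega
    calc ∑ i ∈ Finset.Icc 1 t, ∑ j ∈ Finset.Icc 1 t, c i j
        ≤ ∑ i ∈ Finset.Icc 1 t, ∑ j ∈ Finset.Icc 1 t,
          ((if i ≤ j then |c i j| else 0) + (if j ≤ i then |c i j| else 0)) := by
          refine Finset.sum_le_sum fun i _ => Finset.sum_le_sum fun j _ => ?_
          have habs := le_abs_self (c i j)
          have hnn := abs_nonneg (c i j)
          split_ifs with h1 h2 <;> linarith
      _ = ∑ i ∈ Finset.Icc 1 t, ∑ j ∈ Finset.Icc 1 t, (if i ≤ j then |c i j| else 0)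
          + ∑ i ∈ Finset.Icc 1 t, ∑ j ∈ Finset.Icc 1 t, (if j ≤ i then |c i j| else 0) := by
          rw [← Finset.sum_add_distrib]
          exact Finset.sum_congr rfl fun i _ => Finset.sum_add_distrib
      _ = ∑ i ∈ Finset.Icc 1 t, ∑ j ∈ Finset.Icc 1 t, (if i ≤ j then |c i j| else 0)
          + ∑ a ∈ Finset.Icc 1 t, ∑ b ∈ Finset.Icc 1 t, (if a ≤ b then |c a b| else 0) := by
          congr 1
          rw [Finset.sum_comm]
          exact Finset.sum_congr rfl fun a _ => Finset.sum_congr rfl fun b _ => by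
            rw [csymm b a]
      _ ≤ (t : ℝ) * B + (t : ℝ) * B := by
          have hcard : ∑ i ∈ Finset.Icc 1 t, B = (t : ℝ) * B := by
            rw [Finset.sum_const, Nat.card_Icc]
            simp [nsmul_eq_mul]
          gcongr <;>
            · refine le_trans (Finset.sum_le_sum fun i hi => ?_) hcard.le
              obtain ⟨h1', h2'⟩ := Finset.mem_Icc.1 hi
              exact h1 i h1' h2'
      _ = 2 * t * B := by ring
  have ht0 : (0:ℝ) < t := by exact_mod_cast ht
  have hXsum : MemLp (fun ω => ∑ i ∈ Finset.Icc 1 t, (V i ω - ∫ ω', V i ω' ∂P)) 2 P := by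
    have := memLp_finset_sum' (Finset.Icc 1 t) (fun i hi => hW i (Finset.mem_Icc.1 hi).1)
    have heq : (fun ω => ∑ i ∈ Finset.Icc 1 t, (V i ω - ∫ ω', V i ω' ∂P))
        = ∑ i ∈ Finset.Icc 1 t, fun ω => V i ω - ∫ ω', V i ω' ∂P := by
      ext ω; simp
    rw [heq]; exact this
  have hX : MemLp (fun ω => (1 / (t : ℝ)) •
      ∑ i ∈ Finset.Icc 1 t, (V i ω - ∫ ω', V i ω' ∂P)) 2 P := hXsum.const_smul _
  have hpt2 : ∀ ω, ‖(1 / (t : ℝ)) • ∑ i ∈ Finset.Icc 1 t, (V i ω - ∫ ω', V i ω' ∂P)‖ ^ 2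
      = (1 / (t : ℝ)) ^ 2 * ‖∑ i ∈ Finset.Icc 1 t, (V i ω - ∫ ω', V i ω' ∂P)‖ ^ 2 := by
    intro ω
    rw [norm_smul, mul_pow, Real.norm_eq_abs, abs_of_pos (by positivity)]
  have hpart1 : ∫ ω, ‖(1 / (t : ℝ)) •
      ∑ i ∈ Finset.Icc 1 t, (V i ω - ∫ ω', V i ω' ∂P)‖ ^ 2 ∂P ≤ 2 * B / t := by
    rw [integral_congr_ae (Filter.Eventually.of_forall hpt2), integral_const_mul]
    calc (1 / (t : ℝ)) ^ 2 * ∫ ω, ‖∑ i ∈ Finset.Icc 1 t, (V i ω - ∫ ω', V i ω' ∂P)‖ ^ 2 ∂P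
        ≤ (1 / (t : ℝ)) ^ 2 * (2 * t * B) := by
          rw [hexp]
          exact mul_le_mul_of_nonneg_left hdouble (by positivity)
      _ = 2 * B / t := by field_simp
  refine ⟨hpart1, ?_⟩
  exact (my_integral_norm_le_sqrt hX).trans (Real.sqrt_le_sqrt hpart1)
end

section
/- Let H be a real Hilbert space, γ > 0, μ ∈ H, and T : H → H a continuous self-adjoint linear operator satisfying ⟨T x, x⟩ ≥ 0 for all x ∈ H. Then T + γI is bijective and the element m = (T + γI)⁻¹ T μ is the unique minimizer over H of the functional f ↦ ⟨T(f − μ), f − μ⟩ + γ‖f‖²; equivalently, m is the unique element of H satisfying γ m = T(μ − m). -/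
theorem regularized_quadratic_unique_minimizer
    {H : Type*} [NormedAddCommGroup H] [InnerProductSpace ℝ H] [CompleteSpace H]
    (γ : ℝ) (hγ : 0 < γ) (μ : H) (T : H →L[ℝ] H)
    (hsa : ∀ x y : H, inner (𝕜 := ℝ) (T x) y = inner (𝕜 := ℝ) x (T y))
    (hpos : ∀ x : H, 0 ≤ inner (𝕜 := ℝ) (T x) x) :
    Function.Bijective (fun x : H => T x + γ • x) ∧
      ∀ m : H, T m + γ • m = T μ →
        ((∀ f : H,
            inner (𝕜 := ℝ) (T (m - μ)) (m - μ) + γ * ‖m‖ ^ 2 ≤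
              inner (𝕜 := ℝ) (T (f - μ)) (f - μ) + γ * ‖f‖ ^ 2) ∧
          (∀ m' : H,
            (∀ f : H,
              inner (𝕜 := ℝ) (T (m' - μ)) (m' - μ) + γ * ‖m'‖ ^ 2 ≤
                inner (𝕜 := ℝ) (T (f - μ)) (f - μ) + γ * ‖f‖ ^ 2) → m' = m)) ∧
        (γ • m = T (μ - m) ∧ ∀ m' : H, γ • m' = T (μ - m') → m' = m) := by
  classical
  set A : H →L[ℝ] H := T + γ • ContinuousLinearMap.id ℝ H with hA
  have hAapp : ∀ x : H, A x = T x + γ • x := fun x => rfl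
  have hcomm : ∀ x y : H, inner (𝕜 := ℝ) (T x) y = inner (𝕜 := ℝ) (T y) x := by
    intro x y; rw [hsa, real_inner_comm]
  -- coercivity
  have hco : ∀ x : H, γ * ‖x‖ ^ 2 ≤ inner (𝕜 := ℝ) (A x) x := by
    intro x
    rw [hAapp, inner_add_left, real_inner_smul_left, real_inner_self_eq_norm_sq]
    linarith [hpos x]
  -- injectivity of A
  have hsq : ∀ r : ℝ, γ * r ^ 2 ≤ 0 → r = 0 := by
    intro r hr
    by_contra h
    have h2 : 0 < r ^ 2 := by positivity
    nlinarith
  have hker : ∀ x : H, A x = 0 → x = 0 := by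
    intro x hx
    have h0 : inner (𝕜 := ℝ) (A x) x = 0 := by rw [hx, inner_zero_left]
    have h1 := hco x
    exact norm_eq_zero.mp (hsq _ (by linarith))
  have hinj : Function.Injective A := by
    intro x y hxy
    have : A (x - y) = 0 := by rw [map_sub, hxy, sub_self]
    exact sub_eq_zero.mp (hker _ this)
  -- surjectivity of A
  have hlow : ∀ x : H, γ * ‖x‖ ≤ ‖A x‖ := by
    intro x
    rcases eq_or_ne x 0 with rfl | hx
    · simp
    · have hxn : 0 < ‖x‖ := norm_pos_iff.mpr hx
      have h1 : γ * ‖x‖ ^ 2 ≤ ‖A x‖ * ‖x‖ :=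
        le_trans (hco x) (real_inner_le_norm (A x) x)
      have := (mul_le_mul_iff_of_pos_right hxn).mp (by nlinarith : γ * ‖x‖ * ‖x‖ ≤ ‖A x‖ * ‖x‖)
      exact this
  have hanti : AntilipschitzWith ⟨γ⁻¹, le_of_lt (inv_pos.mpr hγ)⟩ A := by
    apply A.antilipschitz_of_bound
    intro x
    change ‖x‖ ≤ γ⁻¹ * ‖A x‖
    have h1 : ‖x‖ = γ⁻¹ * (γ * ‖x‖) := by field_simp
    rw [h1]
    exact mul_le_mul_of_nonneg_left (hlow x) (inv_pos.mpr hγ).le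
  have hclosed : IsClosed (LinearMap.range (A : H →ₗ[ℝ] H) : Set H) :=
    by
      have h := hanti.isClosed_range A.uniformContinuous
      rw [LinearMap.coe_range]
      exact h
  have hrange : LinearMap.range (A : H →ₗ[ℝ] H) = ⊤ := by
    haveI := hclosed.completeSpace_coe
    rw [← (LinearMap.range (A : H →ₗ[ℝ] H)).orthogonal_orthogonal, Submodule.eq_top_iff']
    intro v
    rw [Submodule.mem_orthogonal]
    intro w hw
    have h0 : inner (𝕜 := ℝ) (A w) w = 0 := hw (A w) ⟨w, rfl⟩
    have : w = 0 := by
      have h1 := hco w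
      exact norm_eq_zero.mp (hsq _ (by linarith))
    rw [this, inner_zero_left]
  have hsurj : Function.Surjective A := LinearMap.range_eq_top.mp hrange
  have hbij : Function.Bijective (fun x : H => T x + γ • x) := ⟨hinj, hsurj⟩
  refine ⟨hbij, ?_⟩
  intro m hm
  -- key expansion
  have expand : ∀ f : H,
      inner (𝕜 := ℝ) (T (f - μ)) (f - μ) + γ * ‖f‖ ^ 2
        = (inner (𝕜 := ℝ) (T (m - μ)) (m - μ) + γ * ‖m‖ ^ 2)
          + (inner (𝕜 := ℝ) (T (f - m)) (f - m) + γ * ‖f - m‖ ^ 2) := by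
    intro f
    have hz : inner (𝕜 := ℝ) (T m + γ • m - T μ) (f - m) = 0 := by
      rw [hm, sub_self, inner_zero_left]
    simp only [inner_sub_left, inner_sub_right, inner_add_left, real_inner_smul_left] at hz
    simp only [← real_inner_self_eq_norm_sq, map_sub, inner_sub_left, inner_sub_right]
    have c1 := hcomm f m
    have c2 := hcomm f μ
    have c3 := hcomm m μ
    have c4 : γ * inner (𝕜 := ℝ) m f = γ * inner (𝕜 := ℝ) f m := by
      rw [real_inner_comm]
    linarith [hz]
  constructor
  · constructor
    · intro f
      have h1 := expand f
      have h2 : (0:ℝ) ≤ inner (𝕜 := ℝ) (T (f - m)) (f - m) := hpos _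
      nlinarith [sq_nonneg ‖f - m‖]
    · intro m' hmin
      have h1 := hmin m
      have h2 := expand m'
      have h3 : (0:ℝ) ≤ inner (𝕜 := ℝ) (T (m' - m)) (m' - m) := hpos _
      have h4 : γ * ‖m' - m‖ ^ 2 ≤ 0 := by linarith
      exact sub_eq_zero.mp (norm_eq_zero.mp (hsq _ h4))
  · constructor
    · rw [map_sub]
      exact eq_sub_of_add_eq' hm
    · intro m' hm'
      apply hinj
      rw [hAapp, hAapp, hm]
      rw [map_sub] at hm'
      rw [show γ • m' = T μ - T m' from hm']
      abel
end
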